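/- Let q > 0, c > 0, S > 0, A > 0, and R + B > 0. Define the RSU utility V(p) = (p − c)·( S·(R + B)/(A·p) + S/(A·q) − 1/q ) for p > 0. Then V is strictly concave on (0, ∞); in particular its second derivative equals −2·c·S·(R + B)/(A·p³) < 0 for every p > 0. -/

import Mathlib

section aux

variable (q c S A R B : ℝ)

private noncomputable def fV : ℝ → ℝ :=
  fun p : ℝ => (p - c) * (S * (R + B) / (A * p) + S / (A * q) - 1 / q)

private noncomputable def gV : ℝ → ℝ :=
  fun p : ℝ => (S / (A * q) - 1 / q) + c * (S * (R + B) / A) * (p ^ 2)⁻¹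

private lemma fV_eq :
    fV q c S A R B =
      fun x : ℝ => (x - c) * ((S * (R + B) / A) * x⁻¹ + (S / (A * q) - 1 / q)) := by
  funext x
  simp only [fV]
  rw [div_eq_mul_inv (S * (R + B)), mul_inv]
  ring

private lemma hasDerivAt_fV {p : ℝ} (hp : p ≠ 0) :
    HasDerivAt (fV q c S A R B) (gV q c S A R B p) p := by
  rw [fV_eq]
  have h := ((hasDerivAt_id p).sub_const c).mul
    (((hasDerivAt_inv hp).const_mul (S * (R + B) / A)).add_const (S / (A * q) - 1 / q))
  refine h.congr_deriv ?_
  symm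
  have h1 : p * p⁻¹ = 1 := mul_inv_cancel₀ hp
  simp only [gV, sq, mul_inv, id]
  linear_combination (S * (R + B) / A * p⁻¹) * h1

private lemma deriv_fV_eq {p : ℝ} (hp : p ≠ 0) :
    deriv (fV q c S A R B) p = gV q c S A R B p :=
  (hasDerivAt_fV q c S A R B hp).deriv

private lemma hasDerivAt_gV (hA : A ≠ 0) {p : ℝ} (hp : p ≠ 0) :
    HasDerivAt (gV q c S A R B) (-(2 * c * S * (R + B)) / (A * p ^ 3)) p := by
  have hpow : HasDerivAt (fun x : ℝ => x ^ 2) (2 * p ^ 1) p := by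
    simpa using hasDerivAt_pow 2 p
  have h := ((hpow.inv (pow_ne_zero 2 hp)).const_mul (c * (S * (R + B) / A))).const_add
    (S / (A * q) - 1 / q)
  refine h.congr_deriv ?_
  symm
  have hp2 : (p ^ 2) ^ 2 ≠ 0 := pow_ne_zero 2 (pow_ne_zero 2 hp)
  field_simp

private lemma deriv2_fV (hA : A ≠ 0) {p : ℝ} (hp : p ≠ 0) :
    deriv (deriv (fV q c S A R B)) p = -(2 * c * S * (R + B)) / (A * p ^ 3) := by
  have hev : deriv (fV q c S A R B) =ᶠ[nhds p] gV q c S A R B := by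
    filter_upwards [isOpen_compl_singleton.mem_nhds (by simpa using hp :
      p ∈ ({0}ᶜ : Set ℝ))] with x hx
    exact deriv_fV_eq q c S A R B hx
  rw [hev.deriv_eq]
  exact (hasDerivAt_gV q c S A R B hA hp).deriv

end aux

/-- The RSU utility `V(p) = (p − c)·(S·(R + B)/(A·p) + S/(A·q) − 1/q)` is strictly
concave on `(0, ∞)`, with second derivative `−2·c·S·(R + B)/(A·p³) < 0` there. -/
theorem stmt8 (q c S A R B : ℝ) (hq : 0 < q) (hc : 0 < c) (hS : 0 < S) (hA : 0 < A)
    (hRB : 0 < R + B) :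
    StrictConcaveOn ℝ (Set.Ioi (0 : ℝ))
      (fun p : ℝ => (p - c) * (S * (R + B) / (A * p) + S / (A * q) - 1 / q)) ∧
    ∀ p : ℝ, 0 < p →
      deriv (deriv
        (fun p : ℝ => (p - c) * (S * (R + B) / (A * p) + S / (A * q) - 1 / q))) p
          = -(2 * c * S * (R + B)) / (A * p ^ 3) ∧
      -(2 * c * S * (R + B)) / (A * p ^ 3) < 0 := by
  have hneg : ∀ p : ℝ, 0 < p → -(2 * c * S * (R + B)) / (A * p ^ 3) < 0 := by
    intro p hp
    apply div_neg_of_neg_of_pos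
    · have h2 : 0 < 2 * c * S * (R + B) := by positivity
      linarith
    · positivity
  constructor
  · apply strictConcaveOn_of_deriv2_neg (convex_Ioi 0)
    · intro x hx
      exact (hasDerivAt_fV q c S A R B (ne_of_gt hx)).continuousAt.continuousWithinAt
    · intro x hx
      rw [interior_Ioi] at hx
      have hx' : (0 : ℝ) < x := hx
      have : deriv (deriv (fV q c S A R B)) x = -(2 * c * S * (R + B)) / (A * x ^ 3) :=
        deriv2_fV q c S A R B (ne_of_gt hA) (ne_of_gt hx')
      simp only [Function.iterate_succ, Function.iterate_zero, Function.comp,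
        Function.id_def]
      calc deriv (deriv (fV q c S A R B)) x
          = -(2 * c * S * (R + B)) / (A * x ^ 3) := this
        _ < 0 := hneg x hx'
  · intro p hp
    exact ⟨deriv2_fV q c S A R B (ne_of_gt hA) (ne_of_gt hp), hneg p hp⟩
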